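/- arXiv:math/0403395 — 6 statements merged into one kernel-verified Lean document; each statement's English description precedes it below -/
import Mathlib

section
/- Let p, q, l, l', r be integers with p and q relatively prime and 0 < q < p, satisfying 1 − l·p = r·(p+q). If the rational number (2p+q+1)/(p(p+q)) + 2 − (l+1)/(p+q) − (l'+1)/p is an integer, then p divides r − l' and q·l' ≡ 1 (mod p). -/
/-- If `p, q` are coprime integers with `0 < q < p`, and integers `l, l', r`
satisfy `1 - l*p = r*(p+q)`, and the rational number
`(2p+q+1)/(p(p+q)) + 2 - (l+1)/(p+q) - (l'+1)/p` is an integer, then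
`p ∣ r - l'` and `q*l' ≡ 1 (mod p)`. -/
theorem stmt_1 (p q l l' r : ℤ)
    (hcop : IsCoprime p q) (hq0 : 0 < q) (hqp : q < p)
    (hlr : 1 - l * p = r * (p + q))
    (hint : ∃ k : ℤ,
      ((2 * p + q + 1 : ℚ)) / ((p : ℚ) * ((p : ℚ) + (q : ℚ))) + 2
        - ((l : ℚ) + 1) / ((p : ℚ) + (q : ℚ)) - ((l' : ℚ) + 1) / (p : ℚ) = (k : ℚ)) :
    p ∣ (r - l') ∧ q * l' ≡ 1 [ZMOD p] := by
  obtain ⟨k, hk⟩ := hint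
  have hp0 : (0:ℤ) < p := lt_trans hq0 hqp
  have hpQ : (p : ℚ) ≠ 0 := by exact_mod_cast hp0.ne'
  have hpqQ : ((p : ℚ) + (q : ℚ)) ≠ 0 := by
    have : (0:ℤ) < p + q := by linarith
    have h2 : ((p + q : ℤ) : ℚ) ≠ 0 := by exact_mod_cast this.ne'
    push_cast at h2; exact h2
  field_simp at hk
  have hkZ : ((2*p+q+1+2*(p*(p+q)))*(p+q) - p*(p+q)*(l+1))*p - p*(p+q)*(p+q)*(l'+1)
      = k*(p*(p+q)*(p+q)*p) := by
    have hk' : 2 * p + q + 1 + 2 * p * (p + q) - p * (l + 1) - (p + q) * (l' + 1) = p * (p + q) * k := by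
      exact_mod_cast hk
    linear_combination (p*(p+q)) * hk'
  have hne : p*(p+q) ≠ 0 := by positivity
  have key : 2*p+q+1 + 2*(p*(p+q)) - (l+1)*p - (l'+1)*(p+q) = k*(p*(p+q)) := by
    apply mul_right_cancel₀ hne
    linear_combination hkZ
  have h1 : 1 - q * l' = p * (k*p + k*q - 2*p - 2*q + l + l') := by linear_combination key
  have h2 : 1 - q * r = p * (l + r) := by linear_combination hlr
  have hdvd1 : p ∣ 1 - q * l' := ⟨_, h1⟩
  have hdvd2 : p ∣ q * (l' - r) := by
    refine ⟨(l + r) - (k*p + k*q - 2*p - 2*q + l + l'), ?_⟩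
    linear_combination h2 - h1
  have hdvd3 : p ∣ l' - r := hcop.dvd_of_dvd_mul_left hdvd2
  constructor
  · obtain ⟨c, hc⟩ := hdvd3
    exact ⟨-c, by linarith⟩
  · exact Int.modEq_iff_dvd.mpr (by simpa using hdvd1)
end

section
/- Let p, q, q', l, l', r be integers with p and q relatively prime, 0 < q < p and 0 < q' < p, satisfying 1 − l·p = r·(p+q). Suppose the rational number (2p+q+1)/(p(p+q)) + 2 − (l+1)/(p+q) − (l'+1)/p is an integer, and that l'·q' ≡ 1 (mod p). Then q' = q. -/
/-- If `p, q` are coprime integers with `0 < q < p`, `0 < q' < p`,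
integers `l, l', r` satisfy `1 - l*p = r*(p+q)`, the rational number
`(2p+q+1)/(p(p+q)) + 2 - (l+1)/(p+q) - (l'+1)/p` is an integer, and
`l'*q' ≡ 1 (mod p)`, then `q' = q`. -/
theorem stmt_2 (p q q' l l' r : ℤ)
    (hcop : IsCoprime p q) (hq0 : 0 < q) (hqp : q < p)
    (hq'0 : 0 < q') (hq'p : q' < p)
    (hlr : 1 - l * p = r * (p + q))
    (hint : ∃ k : ℤ,
      ((2 * p + q + 1 : ℚ)) / ((p : ℚ) * ((p : ℚ) + (q : ℚ))) + 2
        - ((l : ℚ) + 1) / ((p : ℚ) + (q : ℚ)) - ((l' : ℚ) + 1) / (p : ℚ) = (k : ℚ))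
    (hl'q' : l' * q' ≡ 1 [ZMOD p]) :
    q' = q := by
  obtain ⟨k, hk⟩ := hint
  have hp0 : (0:ℤ) < p := lt_trans hq0 hqp
  have hpQ : (p:ℚ) ≠ 0 := by exact_mod_cast hp0.ne'
  have hpqQ : (p:ℚ) + (q:ℚ) ≠ 0 := by
    have : (0:ℤ) < p + q := by linarith
    push_cast
    exact_mod_cast this.ne'
  -- clear denominators
  have hE : (2 * p + q + 1 : ℤ) + 2 * (p * (p + q)) - (l + 1) * p
      - (l' + 1) * (p + q) = k * (p * (p + q)) := by
    field_simp at hk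
    have h3 : ((2*(p:ℚ)+(q:ℚ)+1) + 2*((p:ℚ)*((p:ℚ)+(q:ℚ))) - ((l:ℚ)+1)*(p:ℚ)
        - ((l':ℚ)+1)*((p:ℚ)+(q:ℚ)) - (k:ℚ)*((p:ℚ)*((p:ℚ)+(q:ℚ))))
        * ((p:ℚ)*((p:ℚ)+(q:ℚ))) = 0 := by linear_combination ((p:ℚ)*((p:ℚ)+(q:ℚ))) * hk
    have h4 := (mul_eq_zero.mp h3).resolve_right (mul_ne_zero hpQ hpqQ)
    have h2 : ((2 * p + q + 1 : ℤ) + 2 * (p * (p + q)) - (l + 1) * p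
        - (l' + 1) * (p + q) : ℚ) = ((k * (p * (p + q)) : ℤ) : ℚ) := by
      push_cast
      linarith [h4]
    exact_mod_cast h2
  -- hence p ∣ 1 - l' * q
  have hdvd1 : p ∣ 1 - l' * q :=
    ⟨k * (p + q) - 2 * p - 2 * q + l + l', by linarith [hE, mul_comm p (k * (p + q) - 2 * p - 2 * q + l + l')] ⟩
  -- from the hypothesis, p ∣ 1 - l' * q'
  have hdvd2 : p ∣ 1 - l' * q' := hl'q'.dvd
  -- p coprime with l'
  obtain ⟨m, hm⟩ := hdvd2
  have hcopl : IsCoprime p l' := ⟨m, q', by linarith⟩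
  -- p ∣ l' * (q - q')
  have hdvd3 : p ∣ l' * (q - q') := by
    have : p ∣ (1 - l' * q') - (1 - l' * q) := dvd_sub (Dvd.intro m hm.symm) hdvd1
    have h4 : (1 - l' * q') - (1 - l' * q) = l' * (q - q') := by ring
    rwa [h4] at this
  have hdvd4 : p ∣ q - q' := hcopl.dvd_of_dvd_mul_left hdvd3
  have := Int.eq_zero_of_abs_lt_dvd hdvd4 (by rw [abs_lt]; omega)
  omega
end

section
/- Let p, q, q', l, r be integers with p and q relatively prime, 0 < q < p and 0 < q' < p, satisfying 1 − l·p = r·(p+q). If the rational number (2p+q+1)/(p(p+q)) + 2 − (l+1)/(p+q) − (1+q')/p is an integer, then q·q' ≡ 1 (mod p). -/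
/-- If `p, q` are coprime integers with `0 < q < p`, `0 < q' < p`,
integers `l, r` satisfy `1 - l*p = r*(p+q)`, and the rational number
`(2p+q+1)/(p(p+q)) + 2 - (l+1)/(p+q) - (1+q')/p` is an integer, then
`q*q' ≡ 1 (mod p)`. -/
theorem stmt_3 (p q q' l r : ℤ)
    (hcop : IsCoprime p q) (hq0 : 0 < q) (hqp : q < p)
    (hq'0 : 0 < q') (hq'p : q' < p)
    (hlr : 1 - l * p = r * (p + q))
    (hint : ∃ k : ℤ,
      ((2 * p + q + 1 : ℚ)) / ((p : ℚ) * ((p : ℚ) + (q : ℚ))) + 2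
        - ((l : ℚ) + 1) / ((p : ℚ) + (q : ℚ)) - (1 + (q' : ℚ)) / (p : ℚ) = (k : ℚ)) :
    q * q' ≡ 1 [ZMOD p] := by
  obtain ⟨k, hk⟩ := hint
  have hp0 : (0:ℤ) < p := hq0.trans hqp
  have hp : (p:ℚ) ≠ 0 := Int.cast_ne_zero.mpr hp0.ne'
  have hpq : (p:ℚ) + (q:ℚ) ≠ 0 := by
    have h : (0:ℤ) < p + q := by linarith
    exact_mod_cast h.ne'
  field_simp at hk
  have hki : ((2*p+q+1 + 2*(p*(p+q)))*(p+q) - p*(p+q)*(l+1))*p - p*(p+q)*(p+q)*(1+q')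
      = k*(p*(p+q)*(p+q)*p) := by have hk' : 2 * p + q + 1 + 2 * p * (p + q) - p * (l + 1) - (p + q) * (1 + q') = p * (p + q) * k := (by exact_mod_cast hk); linear_combination (p*(p+q)) * hk'
  have hB : (2*p+q+1 + 2*(p*(p+q)))*(p+q) - (p+q)*(l+1)*p - (p+q)*(p+q)*(1+q')
      = k*(p*(p+q)*(p+q)) := by
    apply mul_left_cancel₀ hp0.ne'
    linear_combination hki
  have hdvd : p ∣ q * (1 - q * q') :=
    ⟨-(2*p^2 + p*(2+4*q) + (3*q+1+2*q^2) - p*(l+1) - q*(l+1) - p*(1+q')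
        - 2*q*(1+q') - k*(p^2 + 2*p*q + q^2)), by linear_combination hB⟩
  exact Int.modEq_iff_dvd.mpr (hcop.dvd_of_dvd_mul_left hdvd)
end

section
/- Let m ≥ 1 be an integer, let a ∈ ℂ with a ≠ 0, let r > 0 be a real number, and let F : ℂ → ℂ be continuous on the closed disc {w ∈ ℂ : |w| ≤ r} with |F(w)| ≤ |a|·r^m for all w in this disc. Then there exists w₀ ∈ ℂ with |w₀| ≤ r such that F(w₀) + a·w₀^m = 0. -/
open Complex Metric Set Finset

/-- Continuous logarithm on a compact set that is star-shaped about `0`. -/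
lemma exists_clog_on (s : Set ℂ) (hcomp : IsCompact s) (h0 : (0:ℂ) ∈ s)
    (hstar : ∀ z ∈ s, ∀ c : ℝ, c ∈ Set.Icc (0:ℝ) 1 → (c : ℂ) * z ∈ s)
    (u : ℂ → ℂ) (hu : ContinuousOn u s) (hne : ∀ z ∈ s, u z ≠ 0) :
    ∃ L : ℂ → ℂ, ContinuousOn L s ∧ ∀ z ∈ s, Complex.exp (L z) = u z := by
  -- minimum modulus
  obtain ⟨z₀, hz₀s, hz₀min⟩ := hcomp.exists_isMinOn ⟨0, h0⟩
    (continuous_norm.comp_continuousOn hu)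
  set μ : ℝ := ‖u z₀‖ with hμdef
  have hμ : 0 < μ := by
    simpa [hμdef, norm_pos_iff] using (hne z₀ hz₀s)
  -- uniform continuity
  obtain ⟨δ, hδpos, hδ⟩ := (Metric.uniformContinuousOn_iff.mp
    (hcomp.uniformContinuousOn_of_continuous hu)) μ hμ
  -- boundedness
  obtain ⟨R, hR⟩ := hcomp.isBounded.subset_closedBall 0
  obtain ⟨n, hn⟩ := exists_nat_gt (max (R / δ) 0)
  have hnpos : 0 < (n:ℝ) := lt_of_le_of_lt (le_max_right _ _) hn
  have hn0 : (n:ℂ) ≠ 0 := by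
    exact_mod_cast hnpos.ne'
  have hRn : R < n * δ := by
    have := lt_of_le_of_lt (le_max_left (R/δ) 0) hn
    calc R = (R/δ) * δ := by field_simp
    _ < n * δ := by exact mul_lt_mul_of_pos_right this hδpos
  -- grid points
  set x : ℕ → ℂ → ℂ := fun j z => ((j:ℂ)/(n:ℂ)) * z with hxdef
  have hxmem : ∀ z ∈ s, ∀ j : ℕ, j ≤ n → x j z ∈ s := by
    intro z hz j hj
    have h1 : ((j:ℝ)/(n:ℝ)) ∈ Set.Icc (0:ℝ) 1 := by
      constructor
      · positivity
      · rw [div_le_one hnpos]; exact_mod_cast hj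
    have := hstar z hz _ h1
    simpa [hxdef] using this
  have hnorm : ∀ z ∈ s, ‖z‖ ≤ R := by
    intro z hz
    simpa [Metric.mem_closedBall, Complex.dist_eq] using hR hz
  have hdist : ∀ z ∈ s, ∀ j : ℕ, dist (x (j+1) z) (x j z) < δ := by
    intro z hz j
    have h1 : x (j+1) z - x j z = (1/(n:ℂ)) * z := by
      rw [hxdef]; push_cast; ring
    have h2 : dist (x (j+1) z) (x j z) = (1/(n:ℝ)) * ‖z‖ := by
      rw [Complex.dist_eq, h1]
      simp [map_mul, map_div₀]
    rw [h2]
    calc (1/(n:ℝ)) * ‖z‖ ≤ (1/(n:ℝ)) * R := by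
          apply mul_le_mul_of_nonneg_left (hnorm z hz) (by positivity)
    _ < δ := by rw [div_mul_eq_mul_div, one_mul, div_lt_iff₀ hnpos]; linarith
  -- ratios lie near 1
  set v : ℕ → ℂ → ℂ := fun j z => u (x (j+1) z) / u (x j z) with hvdef
  have hμle : ∀ z ∈ s, μ ≤ ‖u z‖ := fun z hz => hz₀min hz
  have hrat : ∀ z ∈ s, ∀ j : ℕ, j < n → ‖v j z - 1‖ < 1 := by
    intro z hz j hj
    have hj1 : x (j+1) z ∈ s := hxmem z hz (j+1) hj
    have hj0 : x j z ∈ s := hxmem z hz j (le_of_lt hj)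
    have hne0 : u (x j z) ≠ 0 := hne _ hj0
    have h1 : v j z - 1 = (u (x (j+1) z) - u (x j z)) / u (x j z) := by
      show (u (x (j+1) z) / u (x j z)) - 1 = _
      field_simp
    rw [h1, norm_div, div_lt_one (by simpa [norm_pos_iff] using hne0)]
    calc ‖u (x (j+1) z) - u (x j z)‖
        = dist (u (x (j+1) z)) (u (x j z)) := (Complex.dist_eq _ _).symm
    _ < μ := hδ _ hj1 _ hj0 (hdist z hz j)
    _ ≤ ‖u (x j z)‖ := hμle _ hj0
  have hslit : ∀ z ∈ s, ∀ j : ℕ, j < n → v j z ∈ Complex.slitPlane := by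
    intro z hz j hj
    have := Complex.mem_slitPlane_of_norm_lt_one (z := v j z - 1)
      (by simpa using hrat z hz j hj)
    simpa using this
  -- the logarithm
  refine ⟨fun z => Complex.log (u 0) + ∑ j ∈ Finset.range n, Complex.log (v j z), ?_, ?_⟩
  · apply ContinuousOn.add continuousOn_const
    apply continuousOn_finset_sum
    intro j hj
    rw [Finset.mem_range] at hj
    have hcont : ∀ k : ℕ, k ≤ n → ContinuousOn (fun z => u (x k z)) s := by
      intro k hk
      apply hu.comp ((continuous_const.mul continuous_id).continuousOn)
      intro z hz; exact hxmem z hz k hk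
    exact ContinuousOn.clog ((hcont (j+1) hj).div (hcont j (le_of_lt hj))
      (fun z hz => hne _ (hxmem z hz j (le_of_lt hj))))
      (fun z hz => hslit z hz j hj)
  · intro z hz
    have key : ∀ k : ℕ, k ≤ n → u 0 * ∏ j ∈ Finset.range k, v j z = u (x k z) := by
      intro k hk
      induction k with
      | zero => simp [hxdef]
      | succ k ih =>
        have hk' : k ≤ n := le_of_lt (Nat.lt_of_succ_le hk)
        rw [Finset.prod_range_succ, ← mul_assoc, ih hk']
        show u (x k z) * (u (x (k+1) z) / u (x k z)) = _
        rw [mul_div_assoc', mul_div_cancel_left₀ _ (hne _ (hxmem z hz k hk'))]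
    rw [Complex.exp_add, Complex.exp_sum]
    have h2 : ∀ j ∈ Finset.range n, Complex.exp (Complex.log (v j z)) = v j z := by
      intro j hj
      rw [Finset.mem_range] at hj
      exact Complex.exp_log (Complex.slitPlane_ne_zero (hslit z hz j hj))
    rw [Finset.prod_congr rfl h2, Complex.exp_log (hne 0 h0), key n (le_refl n)]
    have : x n z = z := by
      rw [hxdef]; field_simp
    rw [this]
/-- A continuous function on `[0,1]` whose exponential is constantly `1` takes the
same value at the endpoints. -/
lemma eq_of_exp_eq_one {g : ℝ → ℂ} (hg : ContinuousOn g (Set.Icc 0 1))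
    (h : ∀ t ∈ Set.Icc (0:ℝ) 1, Complex.exp (g t) = 1) : g 0 = g 1 := by
  have h0 : (0:ℝ) ∈ Set.Icc (0:ℝ) 1 := by norm_num
  have h1 : (1:ℝ) ∈ Set.Icc (0:ℝ) 1 := by norm_num
  have hrep : ∀ t ∈ Set.Icc (0:ℝ) 1, ∃ k : ℤ, g t = k * (2 * Real.pi * Complex.I) :=
    fun t ht => Complex.exp_eq_one_iff.mp (h t ht)
  set q : ℝ → ℝ := fun t => (g t).im / (2 * Real.pi) with hqdef
  have hqint : ∀ t ∈ Set.Icc (0:ℝ) 1, ∃ k : ℤ, q t = k := by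
    intro t ht
    obtain ⟨k, hk⟩ := hrep t ht
    refine ⟨k, ?_⟩
    rw [hqdef]
    simp only [hk]
    have : ((k:ℂ) * (2 * Real.pi * Complex.I)).im = k * (2 * Real.pi) := by
      simp [Complex.mul_im]
    rw [this, mul_div_assoc, div_self (by positivity), mul_one]
  have hqcont : ContinuousOn q (Set.Icc 0 1) :=
    (Complex.continuous_im.comp_continuousOn hg).div_const _
  have hq01 : q 0 = q 1 := by
    by_contra hne
    rcases lt_or_gt_of_ne hne with hlt | hlt
    · obtain ⟨k0, hk0⟩ := hqint 0 h0
      obtain ⟨k1, hk1⟩ := hqint 1 h1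
      have hk01 : k0 < k1 := by exact_mod_cast (hk0 ▸ hk1 ▸ hlt)
      have hy : (k0:ℝ) + 1/2 ∈ Set.Icc (q 0) (q 1) := by
        constructor
        · rw [hk0]; linarith
        · rw [hk1]
          have : (k0:ℝ) + 1 ≤ k1 := by exact_mod_cast hk01
          linarith
      obtain ⟨t, ht, hqt⟩ := intermediate_value_Icc zero_le_one hqcont hy
      obtain ⟨k, hk⟩ := hqint t ht
      rw [hk] at hqt
      have : ((2*k : ℤ):ℝ) = ((2*k0+1 : ℤ):ℝ) := by push_cast; linarith
      have := Int.cast_injective (α := ℝ) this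
      omega
    · obtain ⟨k0, hk0⟩ := hqint 0 h0
      obtain ⟨k1, hk1⟩ := hqint 1 h1
      have hk01 : k1 < k0 := by exact_mod_cast (hk0 ▸ hk1 ▸ hlt)
      have hy : (k1:ℝ) + 1/2 ∈ Set.Icc (q 1) (q 0) := by
        constructor
        · rw [hk1]; linarith
        · rw [hk0]
          have : (k1:ℝ) + 1 ≤ k0 := by exact_mod_cast hk01
          linarith
      obtain ⟨t, ht, hqt⟩ := intermediate_value_Icc' zero_le_one hqcont hy
      obtain ⟨k, hk⟩ := hqint t ht
      rw [hk] at hqt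
      have : ((2*k : ℤ):ℝ) = ((2*k1+1 : ℤ):ℝ) := by push_cast; linarith
      have := Int.cast_injective (α := ℝ) this
      omega
  obtain ⟨k0, hk0⟩ := hrep 0 h0
  obtain ⟨k1, hk1⟩ := hrep 1 h1
  have him : ∀ k : ℤ, ((k:ℂ) * (2 * Real.pi * Complex.I)).im = k * (2 * Real.pi) := by
    intro k; simp [Complex.mul_im]
  have : (k0:ℝ) = k1 := by
    have e0 : q 0 = k0 := by
      rw [hqdef]; simp only [hk0, him]; field_simp
    have e1 : q 1 = k1 := by
      rw [hqdef]; simp only [hk1, him]; field_simp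
    rw [e0, e1] at hq01; exact hq01
  have : k0 = k1 := by exact_mod_cast this
  rw [hk0, hk1, this]

/-- If `m ≥ 1`, `a ≠ 0`, `r > 0`, and `F : ℂ → ℂ` is continuous on the
closed disc of radius `r` with `|F(w)| ≤ |a|·r^m` there, then there exists `w₀` with
`|w₀| ≤ r` and `F(w₀) + a·w₀^m = 0`. -/
theorem stmt_6 (m : ℕ) (hm : 1 ≤ m) (a : ℂ) (ha : a ≠ 0) (r : ℝ) (hr : 0 < r)
    (F : ℂ → ℂ) (hF : ContinuousOn F (Metric.closedBall (0 : ℂ) r))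
    (hbound : ∀ w ∈ Metric.closedBall (0 : ℂ) r, ‖F w‖ ≤ ‖a‖ * r ^ m) :
    ∃ w₀ : ℂ, ‖w₀‖ ≤ r ∧ F w₀ + a * w₀ ^ m = 0 := by
  by_contra hcon
  push_neg at hcon
  have hcon' : ∀ w : ℂ, ‖w‖ ≤ r → F w + a * w ^ m ≠ 0 := fun w hw => hcon w hw
  -- the boundary circle
  set γ : ℝ → ℂ := fun t => (r:ℂ) * Complex.exp (2 * Real.pi * Complex.I * t) with hγdef
  have hγcont : Continuous γ :=
    continuous_const.mul (Complex.continuous_exp.comp (continuous_const.mul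
      Complex.continuous_ofReal))
  have hγabs : ∀ t : ℝ, ‖γ t‖ = r := by
    intro t
    rw [hγdef]
    simp only [norm_mul, Complex.norm_exp]
    have : (2 * (Real.pi:ℂ) * Complex.I * (t:ℂ)).re = 0 := by simp
    rw [this, Real.exp_zero, mul_one, Complex.norm_real, Real.norm_eq_abs, _root_.abs_of_pos hr]
  have hγmem : ∀ t : ℝ, γ t ∈ Metric.closedBall (0:ℂ) r := by
    intro t
    rw [Metric.mem_closedBall, Complex.dist_eq, sub_zero, hγabs]
  have hγ10 : γ 1 = γ 0 := by
    rw [hγdef]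
    norm_num [Complex.exp_two_pi_mul_I]
  -- the homotopy square
  set S : Set ℂ := {z : ℂ | z.re ∈ Set.Icc (0:ℝ) 1 ∧ z.im ∈ Set.Icc (0:ℝ) 1} with hSdef
  have hScomp : IsCompact S := by
    apply Metric.isCompact_of_isClosed_isBounded
    · exact (isClosed_Icc.preimage Complex.continuous_re).inter
        (isClosed_Icc.preimage Complex.continuous_im)
    · apply Bornology.IsBounded.subset (Metric.isBounded_closedBall (x := (0:ℂ)) (r := 2))
      intro z hz
      rw [Metric.mem_closedBall, Complex.dist_eq, sub_zero]
      calc ‖z‖ ≤ |z.re| + |z.im| := Complex.norm_le_abs_re_add_abs_im z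
      _ ≤ 1 + 1 := by
          apply add_le_add
          · rw [abs_le]; constructor <;> [linarith [hz.1.1]; exact hz.1.2]
          · rw [abs_le]; constructor <;> [linarith [hz.2.1]; exact hz.2.2]
      _ = 2 := by norm_num
  have hS0 : (0:ℂ) ∈ S := by constructor <;> norm_num
  have hSstar : ∀ z ∈ S, ∀ c : ℝ, c ∈ Set.Icc (0:ℝ) 1 → (c:ℂ) * z ∈ S := by
    intro z hz c hc
    have key : ∀ x : ℝ, x ∈ Set.Icc (0:ℝ) 1 → c * x ∈ Set.Icc (0:ℝ) 1 := by
      intro x hx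
      exact ⟨mul_nonneg hc.1 hx.1, mul_le_one₀ hc.2 hx.1 hx.2⟩
    constructor
    · simpa [Complex.mul_re] using key z.re hz.1
    · simpa [Complex.mul_im] using key z.im hz.2
  set K : ℂ → ℂ := fun z => a * (γ z.re) ^ m + (z.im : ℂ) * F (γ z.re) with hKdef
  have hKcont : ContinuousOn K S := by
    apply ContinuousOn.add
    · exact (continuous_const.mul ((hγcont.comp Complex.continuous_re).pow m)).continuousOn
    · apply ContinuousOn.mul
      · exact (Complex.continuous_ofReal.comp Complex.continuous_im).continuousOn
      · exact hF.comp (hγcont.comp Complex.continuous_re).continuousOn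
          (fun z _ => hγmem z.re)
  have habsr : 0 < ‖a‖ * r ^ m := by
    have := norm_pos_iff.mpr ha
    positivity
  have hKne : ∀ z ∈ S, K z ≠ 0 := by
    intro z hz hKz
    have ht1 : z.im ≤ 1 := hz.2.2
    have ht0 : 0 ≤ z.im := hz.2.1
    have heq : a * (γ z.re) ^ m = -((z.im : ℂ) * F (γ z.re)) := by
      rw [hKdef] at hKz; linear_combination hKz
    have habs : ‖a‖ * r ^ m = z.im * ‖F (γ z.re)‖ := by
      have := congrArg (‖·‖) heq
      simpa [norm_mul, norm_pow, hγabs, Complex.norm_real, Real.norm_eq_abs, _root_.abs_of_nonneg ht0] using this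
    have hle : ‖a‖ * r ^ m ≤ z.im * (‖a‖ * r ^ m) := by
      calc ‖a‖ * r ^ m = z.im * ‖F (γ z.re)‖ := habs
      _ ≤ z.im * (‖a‖ * r ^ m) :=
          mul_le_mul_of_nonneg_left (hbound _ (hγmem z.re)) ht0
    have h1le : 1 ≤ z.im := by
      by_contra hlt
      push_neg at hlt
      nlinarith
    have him1 : z.im = 1 := le_antisymm ht1 h1le
    apply hcon' (γ z.re) (le_of_eq (hγabs z.re))
    have hKz' : a * (γ z.re) ^ m + (z.im : ℂ) * F (γ z.re) = 0 := hKz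
    rw [him1] at hKz'
    simp only [Complex.ofReal_one, one_mul] at hKz'
    linear_combination hKz'
  -- continuous logs
  obtain ⟨L', hL'cont, hL'⟩ := exists_clog_on S hScomp hS0 hSstar K hKcont hKne
  set D : Set ℂ := Metric.closedBall (0:ℂ) r with hDdef
  have hDcomp : IsCompact D := isCompact_closedBall _ _
  have hD0 : (0:ℂ) ∈ D := by
    rw [hDdef, Metric.mem_closedBall]; simpa using hr.le
  have hDstar : ∀ z ∈ D, ∀ c : ℝ, c ∈ Set.Icc (0:ℝ) 1 → (c:ℂ) * z ∈ D := by
    intro z hz c hc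
    rw [hDdef, Metric.mem_closedBall, Complex.dist_eq, sub_zero] at hz ⊢
    rw [norm_mul, Complex.norm_real, Real.norm_eq_abs, _root_.abs_of_nonneg hc.1]
    calc c * ‖z‖ ≤ 1 * ‖z‖ :=
          mul_le_mul_of_nonneg_right hc.2 (norm_nonneg z)
    _ ≤ r := by rw [one_mul]; exact hz
  set h : ℂ → ℂ := fun w => F w + a * w ^ m with hhdef
  have hhcont : ContinuousOn h D := by
    exact hF.add (continuous_const.mul (continuous_id.pow m)).continuousOn
  have hhne : ∀ w ∈ D, h w ≠ 0 := by
    intro w hw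
    rw [Metric.mem_closedBall, Complex.dist_eq, sub_zero] at hw
    exact hcon' w hw
  obtain ⟨L, hLcont, hL⟩ := exists_clog_on D hDcomp hD0 hDstar h hhcont hhne
  -- membership of various points of the square
  have hmem_b : ∀ s : ℝ, s ∈ Set.Icc (0:ℝ) 1 → (s:ℂ) ∈ S := by
    intro s hs; exact ⟨by simpa using hs, by norm_num⟩
  have hmem_t : ∀ s : ℝ, s ∈ Set.Icc (0:ℝ) 1 → (s:ℂ) + Complex.I ∈ S := by
    intro s hs; exact ⟨by simpa using hs, by norm_num⟩
  have hmem_l : ∀ t : ℝ, t ∈ Set.Icc (0:ℝ) 1 → (t:ℂ) * Complex.I ∈ S := by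
    intro t ht; exact ⟨by norm_num, by simpa using ht⟩
  have hmem_r : ∀ t : ℝ, t ∈ Set.Icc (0:ℝ) 1 → 1 + (t:ℂ) * Complex.I ∈ S := by
    intro t ht; exact ⟨by norm_num, by simpa using ht⟩
  -- Step 1: bottom edge, L'(1) - L'(0) = 2 π i m
  have harne : (a * (r:ℂ) ^ m) ≠ 0 :=
    mul_ne_zero ha (pow_ne_zero _ (by exact_mod_cast hr.ne'))
  set c : ℂ := Complex.log (a * (r:ℂ) ^ m) with hcdef
  have hexpc : Complex.exp c = a * (r:ℂ) ^ m := Complex.exp_log harne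
  have hKbot : ∀ s : ℝ, K ((s:ℂ)) = a * (r:ℂ)^m * Complex.exp (2 * Real.pi * Complex.I * (m:ℂ) * s) := by
    intro s
    rw [hKdef]
    simp only [Complex.ofReal_re, Complex.ofReal_im, Complex.ofReal_zero, zero_mul, add_zero]
    rw [hγdef]
    simp only [mul_pow, ← Complex.exp_nat_mul]
    ring_nf
  have hbot : L' 1 - L' 0 = 2 * Real.pi * Complex.I * (m:ℂ) := by
    set φ : ℝ → ℂ := fun s => L' ((s:ℂ)) - (c + 2 * Real.pi * Complex.I * (m:ℂ) * s) with hφdef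
    have hφcont : ContinuousOn φ (Set.Icc 0 1) := by
      apply ContinuousOn.sub
      · exact hL'cont.comp Complex.continuous_ofReal.continuousOn
          (fun s hs => hmem_b s hs)
      · exact (continuous_const.add (continuous_const.mul
          Complex.continuous_ofReal)).continuousOn
    have hφexp : ∀ s ∈ Set.Icc (0:ℝ) 1, Complex.exp (φ s) = 1 := by
      intro s hs
      rw [hφdef]
      simp only
      rw [Complex.exp_sub, hL' _ (hmem_b s hs), hKbot s, Complex.exp_add, hexpc]
      field_simp [pow_ne_zero m (Complex.ofReal_ne_zero.mpr hr.ne')]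
    have := eq_of_exp_eq_one hφcont hφexp
    rw [hφdef] at this
    simp only [Complex.ofReal_zero, Complex.ofReal_one, mul_zero, mul_one, add_zero] at this
    linear_combination -this
  -- Step 2: top edge, L'(1+I) - L'(I) = 0
  have hKtop : ∀ s : ℝ, K ((s:ℂ) + Complex.I) = h (γ s) := by
    intro s
    rw [hKdef, hhdef]
    simp only [Complex.add_re, Complex.ofReal_re, Complex.I_re, add_zero,
      Complex.add_im, Complex.ofReal_im, Complex.I_im, zero_add, Complex.ofReal_one, one_mul]
    ring
  have htop : L' (1 + Complex.I) - L' Complex.I = 0 := by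
    set ψ : ℝ → ℂ := fun s => L' ((s:ℂ) + Complex.I) - L (γ s) with hψdef
    have hψcont : ContinuousOn ψ (Set.Icc 0 1) := by
      apply ContinuousOn.sub
      · exact hL'cont.comp ((Complex.continuous_ofReal.add continuous_const)).continuousOn
          (fun s hs => hmem_t s hs)
      · exact hLcont.comp hγcont.continuousOn (fun s _ => hγmem s)
    have hψexp : ∀ s ∈ Set.Icc (0:ℝ) 1, Complex.exp (ψ s) = 1 := by
      intro s hs
      rw [hψdef]
      simp only
      rw [Complex.exp_sub, hL' _ (hmem_t s hs), hKtop s, hL _ (hγmem s)]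
      exact div_self (hhne _ (hγmem s))
    have := eq_of_exp_eq_one hψcont hψexp
    rw [hψdef] at this
    simp only [Complex.ofReal_zero, Complex.ofReal_one, zero_add, hγ10] at this
    linear_combination -this
  -- Step 3: the two vertical edges agree, so 2 π i m = 0
  set g : ℝ → ℂ := fun t => L' (1 + (t:ℂ) * Complex.I) - L' ((t:ℂ) * Complex.I) with hgdef
  have hgcont : ContinuousOn g (Set.Icc 0 1) := by
    apply ContinuousOn.sub
    · exact hL'cont.comp ((continuous_const.add
        (Complex.continuous_ofReal.mul continuous_const))).continuousOn
        (fun t ht => hmem_r t ht)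
    · exact hL'cont.comp ((Complex.continuous_ofReal.mul continuous_const)).continuousOn
        (fun t ht => hmem_l t ht)
  have hre_r : ∀ t : ℝ, (1 + (t:ℂ) * Complex.I).re = 1 := by intro t; simp
  have him_r : ∀ t : ℝ, (1 + (t:ℂ) * Complex.I).im = t := by intro t; simp
  have hre_l : ∀ t : ℝ, ((t:ℂ) * Complex.I).re = 0 := by intro t; simp
  have him_l : ∀ t : ℝ, ((t:ℂ) * Complex.I).im = t := by intro t; simp
  have hKlr : ∀ t : ℝ, K (1 + (t:ℂ) * Complex.I) = K ((t:ℂ) * Complex.I) := by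
    intro t
    rw [hKdef]
    simp only [hre_r, him_r, hre_l, him_l, hγ10]
  have hgexp : ∀ t ∈ Set.Icc (0:ℝ) 1, Complex.exp (g t) = 1 := by
    intro t ht
    rw [hgdef]
    simp only
    rw [Complex.exp_sub, hL' _ (hmem_r t ht), hL' _ (hmem_l t ht), hKlr t]
    exact div_self (hKne _ (hmem_l t ht))
  have hg01 := eq_of_exp_eq_one hgcont hgexp
  rw [hgdef] at hg01
  simp only [Complex.ofReal_zero, Complex.ofReal_one, zero_mul, one_mul, add_zero] at hg01
  rw [hbot, htop] at hg01
  have hm0 : (m:ℂ) = 0 := by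
    have hπ : (Real.pi : ℂ) ≠ 0 := by exact_mod_cast Real.pi_ne_zero
    rcases mul_eq_zero.mp hg01 with h | h
    · exfalso
      rcases mul_eq_zero.mp h with h' | h'
      · rcases mul_eq_zero.mp h' with h'' | h''
        · norm_num at h''
        · exact hπ h''
      · exact Complex.I_ne_zero h'
    · exact h
  have : m = 0 := by exact_mod_cast hm0
  omega
end

section
/- Identify ℂ with ℝ² via w = s + it, and for a function f : ℂ → ℂ let ∂_s f and ∂_t f denote its partial derivatives in the directions 1 and i, let ∂̄f = (1/2)(∂_s f + i·∂_t f), ∂f = (1/2)(∂_s f − i·∂_t f), and Δf = ∂_s²f + ∂_t²f. Let R > 0 and let K be the closed disc of radius R centered at 0 in ℂ. Suppose u : ℂ → ℂ is twice continuously differentiable on an open neighborhood of K, A, B : ℂ → ℂ are continuously differentiable on that neighborhood, and on that neighborhood ∂̄u + A·u + B·ū = 0, where ū denotes the pointwise complex conjugate of u. Then there exists a constant c > 0 such that for all z ∈ K, |Δu(z)| ≤ c·(|u(z)| + |∂_s u(z)| + |∂_t u(z)|). -/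
/-- Partial derivative of `f : ℂ → ℂ` in the real direction `1` (the `s`-direction,
identifying `ℂ` with `ℝ²` via `w = s + it`). -/
noncomputable def ds (f : ℂ → ℂ) (z : ℂ) : ℂ := fderiv ℝ f z 1

/-- Partial derivative of `f : ℂ → ℂ` in the direction `i` (the `t`-direction). -/
noncomputable def dt (f : ℂ → ℂ) (z : ℂ) : ℂ := fderiv ℝ f z Complex.I

/-- The Cauchy–Riemann operator `∂̄ = (1/2)(∂_s + i ∂_t)`. -/
noncomputable def dbar (f : ℂ → ℂ) (z : ℂ) : ℂ := (1 / 2) * (ds f z + Complex.I * dt f z)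

/-- The Laplacian `Δ = ∂_s² + ∂_t²`. -/
noncomputable def lap (f : ℂ → ℂ) (z : ℂ) : ℂ := ds (ds f) z + dt (dt f) z

/-- If `u` is `C²` and `A, B` are `C¹` on an open neighborhood of the
closed disc `K` of radius `R`, and `∂̄u + A·u + B·ū = 0` on that neighborhood, then there
is `c > 0` with `|Δu| ≤ c(|u| + |∂_s u| + |∂_t u|)` on `K`. -/
theorem stmt_7 (R : ℝ) (hR : 0 < R) (u A B : ℂ → ℂ) (U : Set ℂ)
    (hU : IsOpen U) (hKU : Metric.closedBall (0 : ℂ) R ⊆ U)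
    (hu : ContDiffOn ℝ 2 u U) (hA : ContDiffOn ℝ 1 A U) (hB : ContDiffOn ℝ 1 B U)
    (heq : ∀ z ∈ U, dbar u z + A z * u z + B z * (starRingEnd ℂ) (u z) = 0) :
    ∃ c : ℝ, 0 < c ∧ ∀ z ∈ Metric.closedBall (0 : ℂ) R,
      ‖lap u z‖ ≤
        c * (‖u z‖ + ‖ds u z‖ + ‖dt u z‖) := by
  classical
  set g : ℂ → ℂ := fun w => -(A w * u w + B w * (starRingEnd ℂ) (u w)) with hgdef
  -- pointwise bound on U
  have key : ∀ z ∈ U, ‖lap u z‖ ≤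
      (2 * (‖A z‖ + ‖B z‖ + ‖ds A z‖ + ‖dt A z‖
        + ‖ds B z‖ + ‖dt B z‖))
      * (‖u z‖ + ‖ds u z‖ + ‖dt u z‖) := by
    intro z hz
    have hzU : U ∈ nhds z := hU.mem_nhds hz
    have hu2 : ContDiffAt ℝ 2 u z := hu.contDiffAt hzU
    have hA1 : ContDiffAt ℝ 1 A z := hA.contDiffAt hzU
    have hB1 : ContDiffAt ℝ 1 B z := hB.contDiffAt hzU
    have hud : DifferentiableAt ℝ u z := hu2.differentiableAt (by norm_num)
    have hAd : DifferentiableAt ℝ A z := hA1.differentiableAt one_ne_zero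
    have hBd : DifferentiableAt ℝ B z := hB1.differentiableAt one_ne_zero
    have hF1 : ContDiffAt ℝ 1 (fderiv ℝ u) z := hu2.fderiv_right (by norm_num)
    have hFd : DifferentiableAt ℝ (fderiv ℝ u) z := hF1.differentiableAt one_ne_zero
    set f'' : ℂ →L[ℝ] ℂ →L[ℝ] ℂ := fderiv ℝ (fderiv ℝ u) z with hf''
    have hF : HasFDerivAt (fderiv ℝ u) f'' z := hFd.hasFDerivAt
    -- directional second partials
    have hdir : ∀ e : ℂ, HasFDerivAt (fun w => fderiv ℝ u w e) (f''.flip e) z := by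
      intro e
      have := hF.clm_apply (hasFDerivAt_const e z)
      simpa using this
    have hds2 : ds (ds u) z = f'' 1 1 := by
      have h : fderiv ℝ (fun w => fderiv ℝ u w 1) z = f''.flip 1 := (hdir 1).fderiv
      show fderiv ℝ (fun w => fderiv ℝ u w 1) z 1 = f'' 1 1
      rw [h]; rfl
    have hdt2 : dt (dt u) z = f'' Complex.I Complex.I := by
      have h : fderiv ℝ (fun w => fderiv ℝ u w Complex.I) z = f''.flip Complex.I :=
        (hdir Complex.I).fderiv
      show fderiv ℝ (fun w => fderiv ℝ u w Complex.I) z Complex.I = f'' Complex.I Complex.I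
      rw [h]; rfl
    -- derivative of dbar u
    have hdbar : HasFDerivAt (dbar u)
        ((1 / 2 : ℂ) • ((f''.flip 1) + Complex.I • (f''.flip Complex.I))) z := by
      have h1 := hdir 1
      have h2 := (hdir Complex.I).const_mul Complex.I
      exact ((h1.add h2).const_mul ((1 : ℂ) / 2))
    have hdbarfd : ∀ e : ℂ, fderiv ℝ (dbar u) z e
        = (1 / 2 : ℂ) * (f'' e 1 + Complex.I * f'' e Complex.I) := by
      intro e
      rw [hdbar.fderiv]
      simp [ContinuousLinearMap.smul_apply, smul_eq_mul]
      ring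
    -- symmetry
    have hsymm : f'' 1 Complex.I = f'' Complex.I 1 := by
      have h := hu2.isSymmSndFDerivAt (by simp)
      exact h 1 Complex.I
    -- lap in terms of dbar derivatives
    have hlap : lap u z = 2 * (fderiv ℝ (dbar u) z 1
        - Complex.I * fderiv ℝ (dbar u) z Complex.I) := by
      rw [lap, hds2, hdt2, hdbarfd, hdbarfd, hsymm]
      linear_combination ((f'' Complex.I) Complex.I) * Complex.I_sq
    -- dbar u agrees with g on U
    have hev : dbar u =ᶠ[nhds z] g := by
      filter_upwards [hzU] with w hw
      have := heq w hw
      rw [hgdef]; linear_combination this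
    have hfeq : fderiv ℝ (dbar u) z = fderiv ℝ g z := hev.fderiv_eq
    -- derivative of g
    set u' := fderiv ℝ u z
    set A' := fderiv ℝ A z
    set B' := fderiv ℝ B z
    have hcu : HasFDerivAt (fun w => (starRingEnd ℂ) (u w))
        ((Complex.conjCLE : ℂ →L[ℝ] ℂ).comp u') z := by
      exact (Complex.conjCLE.hasFDerivAt).comp z hud.hasFDerivAt
    have hg : HasFDerivAt g
        (-((A z • u' + u z • A') + (B z • ((Complex.conjCLE : ℂ →L[ℝ] ℂ).comp u')
          + (starRingEnd ℂ) (u z) • B'))) z := by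
      exact ((hAd.hasFDerivAt.mul hud.hasFDerivAt).add
        (hBd.hasFDerivAt.mul hcu)).neg
    have hgfd : ∀ e : ℂ, fderiv ℝ g z e
        = -(A z * u' e + u z * A' e + B z * (starRingEnd ℂ) (u' e)
            + (starRingEnd ℂ) (u z) * B' e) := by
      intro e
      rw [hg.fderiv]
      simp [ContinuousLinearMap.smul_apply, smul_eq_mul]
      ring
    -- bound
    have hb : ∀ e : ℂ, ‖fderiv ℝ (dbar u) z e‖
        ≤ ‖A z‖ * ‖u' e‖ + ‖u z‖ * ‖A' e‖
          + ‖B z‖ * ‖u' e‖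
          + ‖u z‖ * ‖B' e‖ := by
      intro e
      rw [hfeq, hgfd]
      calc ‖-(A z * u' e + u z * A' e + B z * (starRingEnd ℂ) (u' e)
            + (starRingEnd ℂ) (u z) * B' e)‖
          = ‖A z * u' e + u z * A' e + B z * (starRingEnd ℂ) (u' e)
            + (starRingEnd ℂ) (u z) * B' e‖ := by rw [norm_neg]
        _ ≤ ‖A z * u' e + u z * A' e + B z * (starRingEnd ℂ) (u' e)‖
            + ‖(starRingEnd ℂ) (u z) * B' e‖ := norm_add_le _ _
        _ ≤ (‖A z * u' e + u z * A' e‖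
            + ‖B z * (starRingEnd ℂ) (u' e)‖)
            + ‖(starRingEnd ℂ) (u z) * B' e‖ := by
              gcongr; exact norm_add_le _ _
        _ ≤ (‖A z * u' e‖ + ‖u z * A' e‖
            + ‖B z * (starRingEnd ℂ) (u' e)‖)
            + ‖(starRingEnd ℂ) (u z) * B' e‖ := by
              gcongr; exact norm_add_le _ _
        _ = ‖A z‖ * ‖u' e‖ + ‖u z‖ * ‖A' e‖
            + ‖B z‖ * ‖u' e‖
            + ‖u z‖ * ‖B' e‖ := by
              simp [norm_mul]
    have hb1 : ‖fderiv ℝ (dbar u) z 1‖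
        ≤ ‖A z‖ * ‖ds u z‖ + ‖u z‖ * ‖ds A z‖
          + ‖B z‖ * ‖ds u z‖
          + ‖u z‖ * ‖ds B z‖ := hb 1
    have hbI : ‖fderiv ℝ (dbar u) z Complex.I‖
        ≤ ‖A z‖ * ‖dt u z‖ + ‖u z‖ * ‖dt A z‖
          + ‖B z‖ * ‖dt u z‖
          + ‖u z‖ * ‖dt B z‖ := hb Complex.I
    have h2 : ‖lap u z‖ ≤ 2 * (‖fderiv ℝ (dbar u) z 1‖
        + ‖fderiv ℝ (dbar u) z Complex.I‖) := by
      rw [hlap]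
      calc ‖2 * (fderiv ℝ (dbar u) z 1
            - Complex.I * fderiv ℝ (dbar u) z Complex.I)‖
          = 2 * ‖fderiv ℝ (dbar u) z 1
            - Complex.I * fderiv ℝ (dbar u) z Complex.I‖ := by
            rw [norm_mul]; norm_num
        _ ≤ 2 * (‖fderiv ℝ (dbar u) z 1‖
            + ‖Complex.I * fderiv ℝ (dbar u) z Complex.I‖) := by
            gcongr
            have := norm_sub_le (fderiv ℝ (dbar u) z 1)
              (Complex.I * fderiv ℝ (dbar u) z Complex.I)
            simpa using this
        _ = 2 * (‖fderiv ℝ (dbar u) z 1‖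
            + ‖fderiv ℝ (dbar u) z Complex.I‖) := by
            rw [norm_mul]; simp
    have h0 : ∀ w : ℂ, 0 ≤ ‖w‖ := fun w => norm_nonneg w
    have hp1 : 0 ≤ (‖A z‖ + ‖B z‖) * ‖u z‖ :=
      mul_nonneg (add_nonneg (h0 (A z)) (h0 (B z))) (h0 (u z))
    have hp2 : 0 ≤ (‖ds A z‖ + ‖dt A z‖ + ‖ds B z‖
        + ‖dt B z‖) * (‖ds u z‖ + ‖dt u z‖) :=
      mul_nonneg (by positivity) (by positivity)
    have hexp : (2 * (‖A z‖ + ‖B z‖ + ‖ds A z‖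
        + ‖dt A z‖ + ‖ds B z‖ + ‖dt B z‖))
        * (‖u z‖ + ‖ds u z‖ + ‖dt u z‖)
        = 2 * ((‖A z‖ * ‖ds u z‖
            + ‖u z‖ * ‖ds A z‖
            + ‖B z‖ * ‖ds u z‖
            + ‖u z‖ * ‖ds B z‖)
          + (‖A z‖ * ‖dt u z‖
            + ‖u z‖ * ‖dt A z‖
            + ‖B z‖ * ‖dt u z‖
            + ‖u z‖ * ‖dt B z‖))
          + 2 * ((‖A z‖ + ‖B z‖) * ‖u z‖
            + (‖ds A z‖ + ‖dt A z‖ + ‖ds B z‖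
              + ‖dt B z‖) * (‖ds u z‖ + ‖dt u z‖)) := by
      ring
    rw [hexp]
    linarith [h2, hb1, hbI, hp1, hp2]
  -- compactness: bound the coefficient on K
  set K := Metric.closedBall (0 : ℂ) R
  have hKc : IsCompact K := isCompact_closedBall 0 R
  have hcA : ContinuousOn A U := hA.continuousOn
  have hcB : ContinuousOn B U := hB.continuousOn
  have hcA' : ContinuousOn (fderiv ℝ A) U := hA.continuousOn_fderiv_of_isOpen hU le_rfl
  have hcB' : ContinuousOn (fderiv ℝ B) U := hB.continuousOn_fderiv_of_isOpen hU le_rfl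
  have hcont : ContinuousOn (fun z => 2 * (‖A z‖ + ‖B z‖
      + ‖ds A z‖ + ‖dt A z‖
      + ‖ds B z‖ + ‖dt B z‖)) K := by
    apply ContinuousOn.mul continuousOn_const
    have h1 : ContinuousOn (fun z => ds A z) U := hcA'.clm_apply continuousOn_const
    have h2 : ContinuousOn (fun z => dt A z) U := hcA'.clm_apply continuousOn_const
    have h3 : ContinuousOn (fun z => ds B z) U := hcB'.clm_apply continuousOn_const
    have h4 : ContinuousOn (fun z => dt B z) U := hcB'.clm_apply continuousOn_const
    exact (((((continuous_norm.comp_continuousOn hcA).add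
      (continuous_norm.comp_continuousOn hcB)).add
      (continuous_norm.comp_continuousOn h1)).add
      (continuous_norm.comp_continuousOn h2)).add
      (continuous_norm.comp_continuousOn h3)).add
      (continuous_norm.comp_continuousOn h4) |>.mono hKU
  obtain ⟨C, hC⟩ := hKc.exists_bound_of_continuousOn hcont
  refine ⟨max C 1, lt_of_lt_of_le one_pos (le_max_right _ _), fun z hz => ?_⟩
  have hzU := hKU hz
  calc ‖lap u z‖
      ≤ (2 * (‖A z‖ + ‖B z‖ + ‖ds A z‖
        + ‖dt A z‖ + ‖ds B z‖ + ‖dt B z‖))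
        * (‖u z‖ + ‖ds u z‖ + ‖dt u z‖) := key z hzU
    _ ≤ max C 1 * (‖u z‖ + ‖ds u z‖ + ‖dt u z‖) := by
        apply mul_le_mul_of_nonneg_right
        · calc (2 * (‖A z‖ + ‖B z‖ + ‖ds A z‖
              + ‖dt A z‖ + ‖ds B z‖ + ‖dt B z‖))
              ≤ ‖(2 * (‖A z‖ + ‖B z‖ + ‖ds A z‖
                + ‖dt A z‖ + ‖ds B z‖ + ‖dt B z‖))‖ :=
                le_abs_self _
            _ ≤ C := hC z hz
            _ ≤ max C 1 := le_max_left _ _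
        · positivity
end

section
/- Let R > 0, let m, n ≥ 1 be integers, and let f, g : ℂ → ℂ be complex differentiable on the open disc {z : |z| < R} with f(0) ≠ 0 and g(0) ≠ 0. Define U(z) = z^m·f(z) and V(z) = z^n·g(z). Then there exists ρ with 0 < ρ < R such that for every θ ∈ ℝ, the function r ↦ |U(r·e^{iθ})|² + |V(r·e^{iθ})|² is strictly increasing on the interval (0, ρ]. -/
set_option maxHeartbeats 1000000

open Set Metric

-- Bernoulli-type bound
lemma pow_lb (p : ℕ) {r s : ℝ} (h0 : 0 ≤ r) (hrs : r ≤ s) :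
    r ^ (p + 1) + (p + 1 : ℝ) * r ^ p * (s - r) ≤ s ^ (p + 1) := by
  induction p with
  | zero => simpa using hrs
  | succ p ih =>
      push_cast at ih ⊢
      have hrp : (0:ℝ) ≤ r ^ p := pow_nonneg h0 p
      have hs0 : 0 ≤ s := le_trans h0 hrs
      have h2 : s * (r ^ (p + 1) + ((p:ℝ) + 1) * r ^ p * (s - r)) ≤ s * s ^ (p + 1) :=
        mul_le_mul_of_nonneg_left ih hs0
      have h3 : (0:ℝ) ≤ ((p:ℝ) + 1) * r ^ p * (s - r) ^ 2 :=
        mul_nonneg (mul_nonneg (by positivity) hrp) (sq_nonneg (s - r))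
      have hid : s * (r ^ (p + 1) + ((p:ℝ) + 1) * r ^ p * (s - r))
          = r ^ (p + 1 + 1) + ((p:ℝ) + 1 + 1) * r ^ (p + 1) * (s - r)
            + ((p:ℝ) + 1) * r ^ p * (s - r) ^ 2 := by ring
      have e1 : s * s ^ (p + 1) = s ^ (p + 1 + 1) := by ring
      linarith [h2, h3]

-- key monotonicity lemma
lemma key_mono (k : ℕ) (hk : 1 ≤ k) (ρ a L : ℝ) (ha : 0 < a) (hL : 0 ≤ L)
    (hLρ : L * ρ < 2 * a) (A : ℝ → ℝ)
    (hA : ∀ r ∈ Set.Ioc (0:ℝ) ρ, a ≤ A r)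
    (hLip : ∀ r ∈ Set.Ioc (0:ℝ) ρ, ∀ s ∈ Set.Ioc (0:ℝ) ρ, r ≤ s → |A s - A r| ≤ L * (s - r)) :
    StrictMonoOn (fun r => r ^ (2 * k) * A r) (Set.Ioc (0:ℝ) ρ) := by
  intro r hr s hs hrs
  obtain ⟨p, hp⟩ : ∃ p, 2 * k = p + 1 + 1 := ⟨2 * k - 2, by omega⟩
  have hr0 : 0 < r := hr.1
  have hrρ : r ≤ ρ := hr.2
  have hrs' : r ≤ s := le_of_lt hrs
  have hrp : (0:ℝ) < r ^ (p + 1) := pow_pos hr0 _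
  have hAs : a ≤ A s := hA s hs
  have hAr : a ≤ A r := hA r hr
  have hlip := hLip r hr s hs hrs'
  have hdiff : A s - A r ≥ -(L * (s - r)) := by
    have h := (abs_le.mp hlip).1
    linarith
  have hpow := pow_lb (p + 1) (le_of_lt hr0) hrs'
  push_cast at hpow
  have h2 : r ^ (p + 1 + 1) + 2 * r ^ (p + 1) * (s - r) ≤ s ^ (p + 1 + 1) := by
    nlinarith [mul_nonneg (mul_nonneg (by positivity : (0:ℝ) ≤ (p:ℝ)) (le_of_lt hrp))
      (by linarith : (0:ℝ) ≤ s - r)]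
  have hLr : L * r < 2 * a := lt_of_le_of_lt (by nlinarith [hr.1.le, hs.2] : L * r ≤ L * ρ) hLρ
  simp only
  rw [hp]
  have hrp2 : (0:ℝ) < r ^ (p + 1 + 1) := pow_pos hr0 _
  -- s^(p+2) * A s - r^(p+2) * A r ≥ 2 r^(p+1)(s-r) a - r^(p+2) L (s-r) = r^(p+1)(s-r)(2a - Lr) > 0
  have hrr : r ^ (p + 1 + 1) = r * r ^ (p + 1) := by ring
  have hsr : (0:ℝ) < s - r := by linarith
  have h4 : (0:ℝ) ≤ 2 * r ^ (p + 1) * (s - r) := mul_nonneg (by positivity) hsr.le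
  nlinarith [mul_pos (mul_pos hrp hsr) (by linarith : (0:ℝ) < 2 * a - L * r),
    mul_le_mul_of_nonneg_right h2 (le_of_lt (lt_of_lt_of_le ha hAs)),
    mul_le_mul_of_nonneg_left hdiff.le (le_of_lt hrp2),
    mul_le_mul_of_nonneg_left hAs h4]

/-- If `f, g` are holomorphic on the open disc of radius `R` with
`f(0) ≠ 0`, `g(0) ≠ 0`, and `U(z) = z^m f(z)`, `V(z) = z^n g(z)` with `m, n ≥ 1`,
then there is `ρ ∈ (0, R)` such that for every `θ ∈ ℝ` the function
`r ↦ |U(re^{iθ})|² + |V(re^{iθ})|²` is strictly increasing on `(0, ρ]`. -/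
theorem stmt_9 (R : ℝ) (hR : 0 < R) (m n : ℕ) (hm : 1 ≤ m) (hn : 1 ≤ n)
    (f g : ℂ → ℂ)
    (hf : DifferentiableOn ℂ f (Metric.ball (0 : ℂ) R))
    (hg : DifferentiableOn ℂ g (Metric.ball (0 : ℂ) R))
    (hf0 : f 0 ≠ 0) (hg0 : g 0 ≠ 0)
    (U V : ℂ → ℂ)
    (hU : ∀ z : ℂ, U z = z ^ m * f z) (hV : ∀ z : ℂ, V z = z ^ n * g z) :
    ∃ ρ : ℝ, 0 < ρ ∧ ρ < R ∧ ∀ θ : ℝ,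
      StrictMonoOn
        (fun r : ℝ =>
          ‖U ((r : ℂ) * Complex.exp ((θ : ℂ) * Complex.I))‖ ^ 2 +
          ‖V ((r : ℂ) * Complex.exp ((θ : ℂ) * Complex.I))‖ ^ 2)
        (Set.Ioc (0 : ℝ) ρ) := by
  set r0 : ℝ := R / 2 with hr0def
  have hr0pos : 0 < r0 := by positivity
  have hr0R : r0 < R := by linarith
  have hsub : Metric.closedBall (0 : ℂ) r0 ⊆ Metric.ball (0 : ℂ) R := by
    intro z hz
    simp only [Metric.mem_closedBall, Metric.mem_ball] at *
    linarith
  have hcpt : IsCompact (Metric.closedBall (0 : ℂ) r0) := isCompact_closedBall _ _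
  -- differentiability at points of the closed ball
  have hfat : ∀ x ∈ Metric.closedBall (0 : ℂ) r0, DifferentiableAt ℂ f x := fun x hx =>
    hf.differentiableAt (Metric.isOpen_ball.mem_nhds (hsub hx))
  have hgat : ∀ x ∈ Metric.closedBall (0 : ℂ) r0, DifferentiableAt ℂ g x := fun x hx =>
    hg.differentiableAt (Metric.isOpen_ball.mem_nhds (hsub hx))
  -- bounds on fderiv
  have hfd : ContinuousOn (fderiv ℂ f) (Metric.closedBall (0 : ℂ) r0) :=
    (((hf.analyticOnNhd Metric.isOpen_ball).fderiv).continuousOn).mono hsub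
  have hgd : ContinuousOn (fderiv ℂ g) (Metric.closedBall (0 : ℂ) r0) :=
    (((hg.analyticOnNhd Metric.isOpen_ball).fderiv).continuousOn).mono hsub
  obtain ⟨Cf, hCf⟩ := hcpt.exists_bound_of_continuousOn hfd
  obtain ⟨Cg, hCg⟩ := hcpt.exists_bound_of_continuousOn hgd
  have hCf0 : 0 ≤ Cf := le_trans (norm_nonneg _) (hCf 0 (Metric.mem_closedBall_self hr0pos.le))
  have hCg0 : 0 ≤ Cg := le_trans (norm_nonneg _) (hCg 0 (Metric.mem_closedBall_self hr0pos.le))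
  -- Lipschitz bounds
  have hflip : ∀ x ∈ Metric.closedBall (0 : ℂ) r0, ∀ y ∈ Metric.closedBall (0 : ℂ) r0,
      ‖f y - f x‖ ≤ Cf * ‖y - x‖ := fun x hx y hy =>
    (convex_closedBall _ _).norm_image_sub_le_of_norm_fderiv_le hfat hCf hx hy
  have hglip : ∀ x ∈ Metric.closedBall (0 : ℂ) r0, ∀ y ∈ Metric.closedBall (0 : ℂ) r0,
      ‖g y - g x‖ ≤ Cg * ‖y - x‖ := fun x hx y hy =>
    (convex_closedBall _ _).norm_image_sub_le_of_norm_fderiv_le hgat hCg hx hy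
  -- sup bounds on |f|, |g|
  obtain ⟨Mf, hMf⟩ := hcpt.exists_bound_of_continuousOn ((hf.continuousOn).mono hsub)
  obtain ⟨Mg, hMg⟩ := hcpt.exists_bound_of_continuousOn ((hg.continuousOn).mono hsub)
  have hMf0 : 0 ≤ Mf := le_trans (norm_nonneg _) (hMf 0 (Metric.mem_closedBall_self hr0pos.le))
  have hMg0 : 0 ≤ Mg := le_trans (norm_nonneg _) (hMg 0 (Metric.mem_closedBall_self hr0pos.le))
  -- lower bounds near 0
  have hfc : ContinuousAt f 0 :=
    (hf.differentiableAt (Metric.isOpen_ball.mem_nhds (Metric.mem_ball_self hR))).continuousAt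
  have hgc : ContinuousAt g 0 :=
    (hg.differentiableAt (Metric.isOpen_ball.mem_nhds (Metric.mem_ball_self hR))).continuousAt
  have hf0pos : 0 < ‖f 0‖ := by
    simpa [norm_pos_iff] using hf0
  have hg0pos : 0 < ‖g 0‖ := by
    simpa [norm_pos_iff] using hg0
  obtain ⟨δf, hδf, hδf'⟩ := Metric.continuousAt_iff.mp hfc (‖f 0‖ / 2) (by linarith)
  obtain ⟨δg, hδg, hδg'⟩ := Metric.continuousAt_iff.mp hgc (‖g 0‖ / 2) (by linarith)
  have hflb : ∀ z : ℂ, ‖z‖ < δf → ‖f 0‖ / 2 ≤ ‖f z‖ := by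
    intro z hz
    have h1 : dist (f z) (f 0) < ‖f 0‖ / 2 := hδf' (by simpa [Complex.dist_eq] using hz)
    have h2 : ‖f z - f 0‖ < ‖f 0‖ / 2 := by
      simpa [Complex.dist_eq] using h1
    have h3 := abs_le.mp (abs_norm_sub_norm_le (f z) (f 0))
    linarith [h3.1]
  have hglb : ∀ z : ℂ, ‖z‖ < δg → ‖g 0‖ / 2 ≤ ‖g z‖ := by
    intro z hz
    have h1 : dist (g z) (g 0) < ‖g 0‖ / 2 := hδg' (by simpa [Complex.dist_eq] using hz)
    have h2 : ‖g z - g 0‖ < ‖g 0‖ / 2 := by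
      simpa [Complex.dist_eq] using h1
    have h3 := abs_le.mp (abs_norm_sub_norm_le (g z) (g 0))
    linarith [h3.1]
  -- constants
  set af : ℝ := (‖f 0‖ / 2) ^ 2 with hafdef
  set ag : ℝ := (‖g 0‖ / 2) ^ 2 with hagdef
  have hafpos : 0 < af := by positivity
  have hagpos : 0 < ag := by positivity
  set Lf : ℝ := 2 * Mf * Cf with hLfdef
  set Lg : ℝ := 2 * Mg * Cg with hLgdef
  have hLf0 : 0 ≤ Lf := by positivity
  have hLg0 : 0 ≤ Lg := by positivity
  -- choose ρ
  set ρ : ℝ := min (min r0 (min (δf / 2) (δg / 2))) (min (af / (Lf + 1)) (ag / (Lg + 1)))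
    with hρdef
  have hρpos : 0 < ρ := by
    apply lt_min (lt_min hr0pos (lt_min (by linarith) (by linarith)))
    exact lt_min (by positivity) (by positivity)
  have hρr0 : ρ ≤ r0 := le_trans (min_le_left _ _) (min_le_left _ _)
  have hρδf : ρ < δf := by
    have : ρ ≤ δf / 2 := le_trans (min_le_left _ _)
      (le_trans (min_le_right _ _) (min_le_left _ _))
    linarith
  have hρδg : ρ < δg := by
    have : ρ ≤ δg / 2 := le_trans (min_le_left _ _)
      (le_trans (min_le_right _ _) (min_le_right _ _))
    linarith
  have hρLf : Lf * ρ < 2 * af := by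
    have h1 : ρ ≤ af / (Lf + 1) := le_trans (min_le_right _ _) (min_le_left _ _)
    have h2 : ρ * (Lf + 1) ≤ af := (le_div_iff₀ (by linarith)).mp h1
    nlinarith
  have hρLg : Lg * ρ < 2 * ag := by
    have h1 : ρ ≤ ag / (Lg + 1) := le_trans (min_le_right _ _) (min_le_right _ _)
    have h2 : ρ * (Lg + 1) ≤ ag := (le_div_iff₀ (by linarith)).mp h1
    nlinarith
  refine ⟨ρ, hρpos, lt_of_le_of_lt hρr0 hr0R, fun θ => ?_⟩
  set e : ℂ := Complex.exp ((θ : ℂ) * Complex.I) with hedef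
  have he : ‖e‖ = 1 := Complex.norm_exp_ofReal_mul_I θ
  have habs : ∀ r : ℝ, 0 < r → ‖(r : ℂ) * e‖ = r := by
    intro r hr
    rw [norm_mul, he, mul_one, Complex.norm_real, Real.norm_eq_abs, abs_of_pos hr]
  have hmem : ∀ r : ℝ, r ∈ Set.Ioc (0:ℝ) ρ → ((r : ℂ) * e) ∈ Metric.closedBall (0:ℂ) r0 := by
    intro r hr
    simp only [Metric.mem_closedBall, dist_zero_right]
    rw [habs r hr.1]
    exact le_trans hr.2 hρr0
  -- apply key_mono to f and g parts
  have hAf : StrictMonoOn (fun r : ℝ => r ^ (2 * m) * ‖f ((r:ℂ) * e)‖ ^ 2)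
      (Set.Ioc (0:ℝ) ρ) := by
    apply key_mono m hm ρ af Lf hafpos hLf0 hρLf
    · intro r hr
      have hzr : ‖(r:ℂ) * e‖ < δf := by rw [habs r hr.1]; linarith [hr.2]
      have := hflb _ hzr
      rw [hafdef]
      exact pow_le_pow_left₀ (by positivity) this 2
    · intro r hr s hs hrs
      set x := ‖f ((s:ℂ) * e)‖ with hx
      set y := ‖f ((r:ℂ) * e)‖ with hy
      have hxM : x ≤ Mf := hMf _ (hmem s hs)
      have hyM : y ≤ Mf := hMf _ (hmem r hr)
      have hx0 : 0 ≤ x := norm_nonneg _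
      have hy0 : 0 ≤ y := norm_nonneg _
      have hdist : ‖f ((s:ℂ) * e) - f ((r:ℂ) * e)‖ ≤ Cf * (s - r) := by
        have := hflip _ (hmem r hr) _ (hmem s hs)
        have hne : ‖(s:ℂ) * e - (r:ℂ) * e‖ = s - r := by
          have : (s:ℂ) * e - (r:ℂ) * e = ((s - r : ℝ) : ℂ) * e := by push_cast; ring
          rw [this, norm_mul, he, mul_one, Complex.norm_real, Real.norm_eq_abs,
            abs_of_nonneg (by linarith)]
        rw [hne] at this
        simpa using this
      have hxy : |x - y| ≤ Cf * (s - r) :=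
        le_trans (abs_norm_sub_norm_le _ _) hdist
      rw [abs_le] at hxy ⊢
      constructor <;> nlinarith [hxy.1, hxy.2]
  have hAg : StrictMonoOn (fun r : ℝ => r ^ (2 * n) * ‖g ((r:ℂ) * e)‖ ^ 2)
      (Set.Ioc (0:ℝ) ρ) := by
    apply key_mono n hn ρ ag Lg hagpos hLg0 hρLg
    · intro r hr
      have hzr : ‖(r:ℂ) * e‖ < δg := by rw [habs r hr.1]; linarith [hr.2]
      have := hglb _ hzr
      rw [hagdef]
      exact pow_le_pow_left₀ (by positivity) this 2
    · intro r hr s hs hrs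
      set x := ‖g ((s:ℂ) * e)‖ with hx
      set y := ‖g ((r:ℂ) * e)‖ with hy
      have hxM : x ≤ Mg := hMg _ (hmem s hs)
      have hyM : y ≤ Mg := hMg _ (hmem r hr)
      have hx0 : 0 ≤ x := norm_nonneg _
      have hy0 : 0 ≤ y := norm_nonneg _
      have hdist : ‖g ((s:ℂ) * e) - g ((r:ℂ) * e)‖ ≤ Cg * (s - r) := by
        have := hglip _ (hmem r hr) _ (hmem s hs)
        have hne : ‖(s:ℂ) * e - (r:ℂ) * e‖ = s - r := by
          have : (s:ℂ) * e - (r:ℂ) * e = ((s - r : ℝ) : ℂ) * e := by push_cast; ring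
          rw [this, norm_mul, he, mul_one, Complex.norm_real, Real.norm_eq_abs,
            abs_of_nonneg (by linarith)]
        rw [hne] at this
        simpa using this
      have hxy : |x - y| ≤ Cg * (s - r) :=
        le_trans (abs_norm_sub_norm_le _ _) hdist
      rw [abs_le] at hxy ⊢
      constructor <;> nlinarith [hxy.1, hxy.2]
  have hsum := hAf.add hAg
  -- now transfer via pointwise equality on the set
  intro r hr s hs hrs
  have heq : ∀ t : ℝ, t ∈ Set.Ioc (0:ℝ) ρ →
      ‖U ((t : ℂ) * e)‖ ^ 2 + ‖V ((t : ℂ) * e)‖ ^ 2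
      = t ^ (2 * m) * ‖f ((t:ℂ) * e)‖ ^ 2
        + t ^ (2 * n) * ‖g ((t:ℂ) * e)‖ ^ 2 := by
    intro t ht
    rw [hU, hV, norm_mul, norm_mul, norm_pow, norm_pow, habs t ht.1]
    rw [mul_pow, mul_pow, ← pow_mul, ← pow_mul, mul_comm m 2, mul_comm n 2]
  have h1 := heq r hr
  have h2 := heq s hs
  simp only at h1 h2 ⊢
  rw [h1, h2]
  exact hsum hr hs hrs
end
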